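/- Let G be a graph with n ≥ 5 vertices and M = M[IAS(G)]. If G is prime and κ(M) < n, then κ(M) is odd and κ(M) ≥ 5. -/

import Mathlib

open scoped ENat

variable {V : Type*} [Fintype V] [DecidableEq V]

/-- The column of the matrix `IAS(G) = (I | A | A+I)` indexed by `(v, i)`:
`i = 0` gives `φ(v)` (identity column), `i = 1` gives `χ(v)` (column of `A`),
`i = 2` gives `ψ(v)` (column of `A + I`). -/
def iasCol (A : Matrix V V (ZMod 2)) : V × Fin 3 → V → ZMod 2 :=
  fun p w =>
    if p.2 = 0 then (if w = p.1 then 1 else 0)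
    else if p.2 = 1 then A w p.1
    else A w p.1 + (if w = p.1 then 1 else 0)

/-- The rank of a subset of the ground set `W(G) = V × Fin 3` of the isotropic
matroid: the GF(2)-rank of the corresponding set of columns. -/
noncomputable def iasRank (A : Matrix V V (ZMod 2)) (S : Set (V × Fin 3)) : ℕ :=
  Module.finrank (ZMod 2) (Submodule.span (ZMod 2) (iasCol A '' S))

/-- The connectivity function `λ(S) = r(S) + r(W - S) - r(M)`. -/
noncomputable def iasLambda (A : Matrix V V (ZMod 2)) (S : Set (V × Fin 3)) : ℕ :=
  iasRank A S + iasRank A Sᶜ - iasRank A Set.univ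

/-- Independence in the isotropic matroid. -/
def iasIndep (A : Matrix V V (ZMod 2)) (S : Set (V × Fin 3)) : Prop :=
  LinearIndependent (ZMod 2) (fun s : S => iasCol A s.1)

/-- Circuits of the isotropic matroid: minimal dependent sets. -/
def iasCircuit (A : Matrix V V (ZMod 2)) (C : Set (V × Fin 3)) : Prop :=
  ¬ iasIndep A C ∧ ∀ S ⊂ C, iasIndep A S

/-- An ordinary `k`-separation: `λ(S) < k` and `|S|, |W - S| ≥ k`. -/
def OrdinarySep (A : Matrix V V (ZMod 2)) (k : ℕ) (S : Set (V × Fin 3)) : Prop :=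
  0 < k ∧ iasLambda A S < k ∧ k ≤ S.ncard ∧ k ≤ Sᶜ.ncard

/-- A cyclic `k`-separation: `λ(S) < k` and both `S` and `W - S` are dependent. -/
def CyclicSep (A : Matrix V V (ZMod 2)) (k : ℕ) (S : Set (V × Fin 3)) : Prop :=
  0 < k ∧ iasLambda A S < k ∧ ¬ iasIndep A S ∧ ¬ iasIndep A Sᶜ

/-- A vertical `k`-separation: `λ(S) < k` and `r(S), r(W - S) ≥ k`. -/
def VerticalSep (A : Matrix V V (ZMod 2)) (k : ℕ) (S : Set (V × Fin 3)) : Prop :=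
  0 < k ∧ iasLambda A S < k ∧ k ≤ iasRank A S ∧ k ≤ iasRank A Sᶜ

/-- `τ(M) = min {k : M has an ordinary k-separation}`, with `min ∅ = ∞`. -/
noncomputable def iasTau (A : Matrix V V (ZMod 2)) : ℕ∞ :=
  sInf {k : ℕ∞ | ∃ m : ℕ, (m : ℕ∞) = k ∧ ∃ S, OrdinarySep A m S}

/-- `κ*(M) = min ({k : M has a cyclic k-separation} ∪ {|W| - r(M)})`. -/
noncomputable def iasKappaStar (A : Matrix V V (ZMod 2)) : ℕ :=
  sInf ({k : ℕ | ∃ S, CyclicSep A k S} ∪ {3 * Fintype.card V - iasRank A Set.univ})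

/-- `κ(M) = min ({k : M has a vertical k-separation} ∪ {r(M)})`. -/
noncomputable def iasKappa (A : Matrix V V (ZMod 2)) : ℕ :=
  sInf ({k : ℕ | ∃ S, VerticalSep A k S} ∪ {iasRank A Set.univ})

/-- The simple graph underlying a looped simple graph given by its adjacency matrix. -/
def toSimpleGraph (A : Matrix V V (ZMod 2)) : SimpleGraph V where
  Adj v w := v ≠ w ∧ A v w = 1 ∧ A w v = 1
  symm := ⟨fun v w ⟨h1, h2, h3⟩ => ⟨Ne.symm h1, h3, h2⟩⟩
  loopless := ⟨fun v h => h.1 rfl⟩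

/-- The open neighborhood `N_G(v)`. -/
def nbhd (A : Matrix V V (ZMod 2)) (v : V) : Set V := {u | u ≠ v ∧ A v u = 1}

/-- `v` is a pendant vertex: `N_G(v) = {w}` for some `w`. -/
def IsPendant (A : Matrix V V (ZMod 2)) (v : V) : Prop := ∃ w, nbhd A v = {w}

/-- `G` has a pair of twin vertices: `v ≠ w` with `N_G(v) - {w} = N_G(w) - {v}`. -/
def HasTwins (A : Matrix V V (ZMod 2)) : Prop :=
  ∃ v w, v ≠ w ∧ nbhd A v \ {w} = nbhd A w \ {v}

/-- The cut-rank `c_G(X)`: the GF(2)-rank of the submatrix `A[V - X, X]`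
(columns indexed by `X`, rows indexed by `V - X`). -/
noncomputable def cutRank (A : Matrix V V (ZMod 2)) (X : Set V) : ℕ :=
  Module.finrank (ZMod 2)
    (Submodule.span (ZMod 2) ((fun x : V => fun w : ↥(Xᶜ) => A w.1 x) '' X))

/-- `τ_G(X) = ⋃_{x ∈ X} τ_G(x)`, the union of the vertex triples of members of `X`. -/
def tauSet (X : Set V) : Set (V × Fin 3) := {p | p.1 ∈ X}

/-- Loop complementation at `v`. -/
def loopComp (A : Matrix V V (ZMod 2)) (v : V) : Matrix V V (ZMod 2) :=
  fun x y => A x y + if x = v ∧ y = v then 1 else 0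

/-- Simple local complementation at `v`. -/
def simpleLocalComp (A : Matrix V V (ZMod 2)) (v : V) : Matrix V V (ZMod 2) :=
  fun x y => A x y +
    if x ≠ y ∧ (x ≠ v ∧ A v x = 1) ∧ (y ≠ v ∧ A v y = 1) then 1 else 0

/-- Non-simple local complementation at `v`. -/
def nonSimpleLocalComp (A : Matrix V V (ZMod 2)) (v : V) : Matrix V V (ZMod 2) :=
  fun x y => simpleLocalComp A v x y + if x = y ∧ x ≠ v ∧ A v x = 1 then 1 else 0

/-- One local move. -/
def LocalStep (A B : Matrix V V (ZMod 2)) : Prop :=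
  ∃ v, B = loopComp A v ∨ B = simpleLocalComp A v ∨ B = nonSimpleLocalComp A v

/-- Local equivalence: a finite sequence of loop complementations and
(simple or non-simple) local complementations. -/
def LocallyEquiv (A B : Matrix V V (ZMod 2)) : Prop :=
  Relation.ReflTransGen LocalStep A B

/-- `G` has a split: a bipartition `(V₁, V₂)` of `V` with `|V₁|, |V₂| ≥ 2` such that the
GF(2)-rank of `A[V₁, V₂]` is at most 1. -/
def HasSplit (A : Matrix V V (ZMod 2)) : Prop :=
  ∃ X : Set V, 2 ≤ X.ncard ∧ 2 ≤ Xᶜ.ncard ∧ cutRank A X ≤ 1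

/-- A transverse circuit: a circuit of the isotropic matroid meeting each
vertex triple at most once. -/
def IsTransverseCircuit (A : Matrix V V (ZMod 2)) (C : Set (V × Fin 3)) : Prop :=
  iasCircuit A C ∧ ∀ p ∈ C, ∀ q ∈ C, p.1 = q.1 → p = q

/-- An isotropic `k`-separation of `G`: `|X|, |V - X| ≥ k` and `c_G(X) < k`. -/
def IsotropicSep (A : Matrix V V (ZMod 2)) (k : ℕ) (X : Set V) : Prop :=
  k ≤ X.ncard ∧ k ≤ Xᶜ.ncard ∧ cutRank A X < k

/-- The isotropic connectivity `κ_B(G)`, with `min ∅ = ∞`. -/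
noncomputable def kappaB (A : Matrix V V (ZMod 2)) : ℕ∞ :=
  sInf {j : ℕ∞ | ∃ k : ℕ, (k : ℕ∞) = j ∧ ∃ X, IsotropicSep A k X}

/-- The 5-cycle `C₅`. -/
def C5mat : Matrix (Fin 5) (Fin 5) (ZMod 2) :=
  fun i j => if (i.val + 1) % 5 = j.val ∨ (j.val + 1) % 5 = i.val then 1 else 0

/-- The wheel `W₅` : a 5-cycle on `{0,…,4}` plus a hub `5` adjacent to all. -/
def W5mat : Matrix (Fin 6) (Fin 6) (ZMod 2) :=
  fun i j =>
    if (i.val = 5 ∧ j.val ≠ 5) ∨ (j.val = 5 ∧ i.val ≠ 5) then 1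
    else if i.val ≠ 5 ∧ j.val ≠ 5 ∧ ((i.val + 1) % 5 = j.val ∨ (j.val + 1) % 5 = i.val) then 1
    else 0
/-! ### Auxiliary development -/

section Aux

open Submodule Module Set

variable (A : Matrix V V (ZMod 2))

private def eVec (v : V) : V → ZMod 2 := fun w => if w = v then 1 else 0

private def aVec (v : V) : V → ZMod 2 := fun w => A w v

private lemma iasCol_zero (v : V) : iasCol A (v, 0) = eVec v := rfl

private lemma iasCol_one (v : V) : iasCol A (v, 1) = aVec A v := rfl

private lemma iasCol_two (v : V) : iasCol A (v, 2) = aVec A v + eVec v := rfl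

private lemma my_finrank_map_add {K M N : Type*} [Field K] [AddCommGroup M] [Module K M]
    [AddCommGroup N] [Module K N] [FiniteDimensional K M] (π : M →ₗ[K] N) (P : Submodule K M) :
    finrank K (P.map π) + finrank K (P ⊓ LinearMap.ker π : Submodule K M) = finrank K P := by
  have h := LinearMap.finrank_range_add_finrank_ker (π.domRestrict P)
  rw [LinearMap.range_domRestrict] at h
  have e : finrank K (LinearMap.ker (π.domRestrict P)) =
      finrank K (P ⊓ LinearMap.ker π : Submodule K M) := by
    apply LinearEquiv.finrank_eq
    exact
      { toFun := fun x => ⟨x.1.1, x.1.2, x.2⟩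
        invFun := fun x => ⟨⟨x.1, x.2.1⟩, x.2.2⟩
        map_add' := fun a b => rfl
        map_smul' := fun a b => rfl
        left_inv := fun x => rfl
        right_inv := fun x => rfl }
  rw [e] at h
  exact h

private lemma frs_le {K M : Type*} [Field K] [AddCommGroup M] [Module K M] (a : M) :
    finrank K (span K ({a} : Set M)) ≤ 1 := by
  by_cases h : a = 0
  · subst h
    rw [Submodule.span_zero_singleton, finrank_bot]
    omega
  · rw [finrank_span_singleton h]

private lemma eVec_sum (f : V → ZMod 2) : ∑ v, f v • eVec v = f := by
  funext w
  rw [Finset.sum_apply]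
  simp only [eVec, Pi.smul_apply, smul_eq_mul, mul_ite, mul_one, mul_zero]
  rw [Finset.sum_ite_eq (Finset.univ) w f]
  simp

private lemma span_top_of_eVec_mem {P : Submodule (ZMod 2) (V → ZMod 2)}
    (h : ∀ v, eVec v ∈ P) : P = ⊤ := by
  rw [eq_top_iff]
  intro f _
  rw [← eVec_sum f]
  exact sum_mem fun v _ => smul_mem _ _ (h v)

private lemma iasRank_univ : iasRank A Set.univ = Fintype.card V := by
  have htop : span (ZMod 2) (iasCol A '' (Set.univ : Set (V × Fin 3))) = ⊤ :=
    span_top_of_eVec_mem (fun v => subset_span ⟨(v, 0), trivial, iasCol_zero A v⟩)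
  rw [show iasRank A Set.univ
      = finrank (ZMod 2) (span (ZMod 2) (iasCol A '' Set.univ)) from rfl,
    htop, finrank_top, Module.finrank_fintype_fun_eq_card]

private lemma ker_res (X : Set V) :
    LinearMap.ker (LinearMap.funLeft (ZMod 2) (ZMod 2) ((↑) : ↥(Xᶜ) → V))
      = span (ZMod 2) (eVec '' X) := by
  apply le_antisymm
  · intro f hf
    rw [LinearMap.mem_ker] at hf
    have hzero : ∀ w : ↥(Xᶜ), f w.1 = 0 := fun w => congrFun hf w
    rw [← eVec_sum f]
    refine sum_mem fun v _ => ?_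
    by_cases hv : v ∈ X
    · exact smul_mem _ _ (subset_span ⟨v, hv, rfl⟩)
    · rw [show f v = 0 from hzero ⟨v, hv⟩, zero_smul]
      exact zero_mem _
  · rw [span_le]
    rintro _ ⟨x, hx, rfl⟩
    rw [SetLike.mem_coe, LinearMap.mem_ker]
    funext w
    show (if (w : V) = x then (1 : ZMod 2) else 0) = 0
    exact if_neg (fun h : (w : V) = x => w.2 (h ▸ hx))

private lemma finrank_span_eVec (X : Set V) :
    finrank (ZMod 2) (span (ZMod 2) (eVec '' X)) = X.ncard := by
  classical
  haveI : Fintype ↥X := Fintype.ofFinite ↥X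
  have h1 : eVec '' X = Set.range (fun x : X => eVec x.1) := Set.image_eq_range _ _
  have hb : (fun v : V => eVec v) = ⇑(Pi.basisFun (ZMod 2) V) := by
    funext v w
    simp [eVec, Pi.basisFun_apply, Pi.single_apply]
  have li : LinearIndependent (ZMod 2) (fun x : X => eVec x.1) := by
    have : LinearIndependent (ZMod 2) (fun v : V => eVec v) := by
      rw [hb]; exact (Pi.basisFun (ZMod 2) V).linearIndependent
    exact this.comp _ Subtype.val_injective
  rw [h1, finrank_span_eq_card li, ← Nat.card_coe_set_eq, Nat.card_eq_fintype_card]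

private lemma iasRank_tauSet (X : Set V) :
    iasRank A (tauSet X) = X.ncard + cutRank A X := by
  classical
  set π : (V → ZMod 2) →ₗ[ZMod 2] (↥(Xᶜ) → ZMod 2) :=
    LinearMap.funLeft (ZMod 2) (ZMod 2) ((↑) : ↥(Xᶜ) → V) with hπ
  set P : Submodule (ZMod 2) (V → ZMod 2) :=
    span (ZMod 2) (iasCol A '' tauSet X) with hP
  have hmap : P.map π = span (ZMod 2) ((fun x : V => fun w : ↥(Xᶜ) => A w.1 x) '' X) := by
    rw [hP, Submodule.map_span]
    apply le_antisymm
    · rw [span_le]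
      rintro _ ⟨_, ⟨⟨v, i⟩, hv, rfl⟩, rfl⟩
      have hv' : v ∈ X := hv
      have hi : i = 0 ∨ i = 1 ∨ i = 2 := by fin_cases i <;> decide
      rcases hi with rfl | rfl | rfl
      · have h0 : π (iasCol A (v, 0)) = 0 := by
          funext w
          show (if (w : V) = v then (1 : ZMod 2) else 0) = 0
          exact if_neg (fun h : (w : V) = v => w.2 (h ▸ hv'))
        rw [h0]
        exact zero_mem _
      · exact subset_span ⟨v, hv', rfl⟩
      · have h2 : π (iasCol A (v, 2)) = (fun x : V => fun w : ↥(Xᶜ) => A w.1 x) v := by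
          funext w
          show A (w : V) v + (if (w : V) = v then (1 : ZMod 2) else 0) = A (w : V) v
          rw [if_neg (fun h : (w : V) = v => w.2 (h ▸ hv')), add_zero]
        rw [h2]
        exact subset_span ⟨v, hv', rfl⟩
    · rw [span_le]
      rintro _ ⟨x, hx, rfl⟩
      exact subset_span ⟨iasCol A (x, 1), ⟨(x, 1), hx, rfl⟩, rfl⟩
  have hEP : span (ZMod 2) (eVec '' X) ≤ P := by
    rw [span_le]
    rintro _ ⟨x, hx, rfl⟩
    exact subset_span ⟨(x, 0), hx, iasCol_zero A x⟩
  have hinf : P ⊓ LinearMap.ker π = span (ZMod 2) (eVec '' X) := by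
    rw [hπ, ker_res]
    exact inf_eq_right.mpr hEP
  have key := my_finrank_map_add π P
  rw [hmap, hinf, finrank_span_eVec] at key
  have h1 : iasRank A (tauSet X) = finrank (ZMod 2) P := rfl
  have h2 : cutRank A X
      = finrank (ZMod 2) (span (ZMod 2) ((fun x : V => fun w : ↥(Xᶜ) => A w.1 x) '' X)) := rfl
  omega

private lemma cutRank_compl {A : Matrix V V (ZMod 2)} (hA : A.IsSymm) (X : Set V) :
    cutRank A Xᶜ = cutRank A X := by
  classical
  haveI : Fintype ↥X := Fintype.ofFinite ↥X
  haveI : Fintype ↥(Xᶜ) := Fintype.ofFinite ↥(Xᶜ)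
  haveI : Fintype ↥(Xᶜᶜ) := Fintype.ofFinite ↥(Xᶜᶜ)
  set B : Matrix ↥(Xᶜ) ↥X (ZMod 2) := Matrix.of fun w x => A w.1 x.1 with hB
  set C : Matrix ↥X ↥(Xᶜ) (ZMod 2) := Matrix.of fun r c => A r.1 c.1 with hC
  have hCB : C = B.transpose := by
    ext r c
    exact hA.apply c.1 r.1
  -- identify cutRank A X with B.rank
  have h1 : cutRank A X = B.rank := by
    rw [Matrix.rank_eq_finrank_span_cols]
    have hset : (fun x : V => fun w : ↥(Xᶜ) => A w.1 x) '' X = Set.range B.transpose := by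
      rw [Set.image_eq_range]; rfl
    show finrank (ZMod 2) (span (ZMod 2) ((fun x : V => fun w : ↥(Xᶜ) => A w.1 x) '' X)) = _
    rw [hset]; rfl
  -- identify cutRank A Xᶜ with (span of the corresponding columns over rows Xᶜᶜ)
  set σ : ↥(Xᶜᶜ) ≃ ↥X := Equiv.setCongr (compl_compl X) with hσ
  set Φ : (↥X → ZMod 2) ≃ₗ[ZMod 2] (↥(Xᶜᶜ) → ZMod 2) :=
    LinearEquiv.funCongrLeft (ZMod 2) (ZMod 2) σ with hΦ
  have h2 : cutRank A Xᶜ = C.rank := by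
    show finrank (ZMod 2)
      (span (ZMod 2) ((fun x : V => fun w : ↥(Xᶜᶜ) => A w.1 x) '' Xᶜ)) = _
    have himg : (fun x : V => fun w : ↥(Xᶜᶜ) => A w.1 x) '' Xᶜ
        = ⇑Φ '' ((fun x : V => fun w : ↥X => A w.1 x) '' Xᶜ) := by
      rw [Set.image_image]
      rfl
    have hset : (fun x : V => fun w : ↥X => A w.1 x) '' Xᶜ = Set.range C.transpose := by
      rw [Set.image_eq_range]; rfl
    rw [himg]
    have hm : span (ZMod 2) (⇑Φ '' ((fun x : V => fun w : ↥X => A w.1 x) '' Xᶜ))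
        = (span (ZMod 2) ((fun x : V => fun w : ↥X => A w.1 x) '' Xᶜ)).map
          (Φ : (↥X → ZMod 2) →ₗ[ZMod 2] (↥(Xᶜᶜ) → ZMod 2)) := (Submodule.map_span _ _).symm
    rw [hm]
    exact (LinearEquiv.finrank_map_eq Φ _).trans
      (by rw [hset, Matrix.rank_eq_finrank_span_cols]; rfl)
  rw [h1, h2, hCB, Matrix.rank_transpose]

private lemma cutRank_insert_le (X : Set V) (u : V) :
    cutRank A (insert u X) ≤ cutRank A X + 1 := by
  classical
  set g : V → (↥((insert u X)ᶜ) → ZMod 2) := fun x => fun w => A w.1 x with hg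
  set ρ : (↥(Xᶜ) → ZMod 2) →ₗ[ZMod 2] (↥((insert u X)ᶜ) → ZMod 2) :=
    LinearMap.funLeft (ZMod 2) (ZMod 2)
      (fun w : ↥((insert u X)ᶜ) =>
        (⟨w.1, fun h => w.2 (Set.mem_insert_of_mem u h)⟩ : ↥(Xᶜ))) with hρ
  have h0 : cutRank A (insert u X)
      = finrank (ZMod 2) (span (ZMod 2) (g '' insert u X)) := rfl
  rw [h0, Set.image_insert_eq, Submodule.span_insert]
  have e := Submodule.finrank_sup_add_finrank_inf_eq
    (span (ZMod 2) ({g u} : Set _)) (span (ZMod 2) (g '' X))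
  have h1 : finrank (ZMod 2) (span (ZMod 2) ({g u} : Set _)) ≤ 1 := frs_le _
  have h2 : finrank (ZMod 2) (span (ZMod 2) (g '' X)) ≤ cutRank A X := by
    have hmap : span (ZMod 2) (g '' X)
        = (span (ZMod 2) ((fun x : V => fun w : ↥(Xᶜ) => A w.1 x) '' X)).map ρ := by
      rw [Submodule.map_span, Set.image_image]
      rfl
    rw [hmap]
    exact Submodule.finrank_map_le ρ _
  omega

private lemma cutRank_diff_le (X : Set V) (u : V) :
    cutRank A (X \ {u}) ≤ cutRank A X + 1 := by
  classical
  have hsub : ∀ w : ↥(Xᶜ), w.1 ∈ ((X \ {u})ᶜ : Set V) :=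
    fun w h => w.2 h.1
  set ρ : (↥((X \ {u})ᶜ) → ZMod 2) →ₗ[ZMod 2] (↥(Xᶜ) → ZMod 2) :=
    LinearMap.funLeft (ZMod 2) (ZMod 2)
      (fun w : ↥(Xᶜ) => (⟨w.1, hsub w⟩ : ↥((X \ {u})ᶜ))) with hρ
  set g : V → (↥((X \ {u})ᶜ) → ZMod 2) := fun x => fun w => A w.1 x with hg
  set P : Submodule (ZMod 2) (↥((X \ {u})ᶜ) → ZMod 2) :=
    span (ZMod 2) (g '' (X \ {u})) with hP
  have h0 : cutRank A (X \ {u}) = finrank (ZMod 2) P := rfl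
  have key := my_finrank_map_add ρ P
  have h2 : finrank (ZMod 2) (P.map ρ) ≤ cutRank A X := by
    have hmap : P.map ρ
        = span (ZMod 2) ((fun x : V => fun w : ↥(Xᶜ) => A w.1 x) '' (X \ {u})) := by
      rw [hP, Submodule.map_span, Set.image_image]
      rfl
    rw [hmap]
    exact Submodule.finrank_mono (Submodule.span_mono (Set.image_mono Set.diff_subset))
  have h3 : finrank (ZMod 2) (P ⊓ LinearMap.ker ρ :
      Submodule (ZMod 2) (↥((X \ {u})ᶜ) → ZMod 2)) ≤ 1 := by
    have hu : u ∈ ((X \ {u})ᶜ : Set V) := fun h => h.2 rfl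
    set δ : ↥((X \ {u})ᶜ) → ZMod 2 := fun w => if w.1 = u then 1 else 0 with hδ
    have hker : LinearMap.ker ρ ≤ span (ZMod 2) ({δ} : Set _) := by
      intro f hf
      rw [LinearMap.mem_ker] at hf
      have hvanish : ∀ w : ↥(Xᶜ), f ⟨w.1, hsub w⟩ = 0 := fun w => congrFun hf w
      have hfd : f = f ⟨u, hu⟩ • δ := by
        funext w
        by_cases hw : w.1 = u
        · have : w = ⟨u, hu⟩ := Subtype.ext hw
          rw [this, hδ]
          simp
        · have hwX : w.1 ∈ (Xᶜ : Set V) := by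
            intro hmem
            exact w.2 ⟨hmem, hw⟩
          have := hvanish ⟨w.1, hwX⟩
          have hww : (⟨(⟨w.1, hwX⟩ : ↥(Xᶜ)).1, hsub ⟨w.1, hwX⟩⟩ : ↥((X \ {u})ᶜ)) = w :=
            Subtype.ext rfl
          rw [hww] at this
          rw [this, hδ]
          simp [hw]
      rw [hfd]
      exact smul_mem _ _ (subset_span rfl)
    calc finrank (ZMod 2) (P ⊓ LinearMap.ker ρ :
          Submodule (ZMod 2) (↥((X \ {u})ᶜ) → ZMod 2))
        ≤ finrank (ZMod 2) (span (ZMod 2) ({δ} : Set _)) :=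
          Submodule.finrank_mono (le_trans inf_le_right hker)
      _ ≤ 1 := frs_le _
  omega

private def Tsp (v : V) : Submodule (ZMod 2) (V → ZMod 2) :=
  span (ZMod 2) {eVec v, aVec A v}

private lemma Tsp_le {v : V} {P : Submodule (ZMod 2) (V → ZMod 2)}
    (h1 : eVec v ∈ P) (h2 : aVec A v ∈ P) : Tsp A v ≤ P := by
  rw [Tsp, span_le]
  intro x hx
  rcases hx with rfl | hx
  · exact h1
  · rw [Set.mem_singleton_iff] at hx
    subst hx
    exact h2

private lemma eVec_mem_Tsp (v : V) : eVec v ∈ Tsp A v :=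
  subset_span (Set.mem_insert _ _)

private lemma aVec_mem_Tsp (v : V) : aVec A v ∈ Tsp A v :=
  subset_span (Set.mem_insert_of_mem _ rfl)

private lemma col_mem_Tsp (p : V × Fin 3) : iasCol A p ∈ Tsp A p.1 := by
  obtain ⟨v, i⟩ := p
  have hi : i = 0 ∨ i = 1 ∨ i = 2 := by fin_cases i <;> decide
  rcases hi with rfl | rfl | rfl
  · exact eVec_mem_Tsp A v
  · exact aVec_mem_Tsp A v
  · rw [iasCol_two]
    exact add_mem (aVec_mem_Tsp A v) (eVec_mem_Tsp A v)

private lemma aVec_eq_20 (v : V) : aVec A v = iasCol A (v, 2) + iasCol A (v, 0) := by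
  funext w
  show aVec A v w = (A w v + (if w = v then 1 else 0)) + (if w = v then 1 else 0)
  have : ∀ x y : ZMod 2, x = (x + y) + y := by decide
  exact this _ _

private lemma eVec_eq_12 (v : V) : eVec v = iasCol A (v, 1) + iasCol A (v, 2) := by
  funext w
  show (if w = v then (1 : ZMod 2) else 0) = A w v + (A w v + (if w = v then 1 else 0))
  have : ∀ x y : ZMod 2, x = y + (y + x) := by decide
  exact this _ _

private lemma T_le_side (S' : Set (V × Fin 3)) (v : V) (i j : Fin 3) (hij : i ≠ j)
    (hi : (v, i) ∈ S') (hj : (v, j) ∈ S') :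
    Tsp A v ≤ span (ZMod 2) (iasCol A '' S') := by
  have m : ∀ k : Fin 3, (v, k) ∈ S' → iasCol A (v, k) ∈ span (ZMod 2) (iasCol A '' S') :=
    fun k hk => subset_span ⟨(v, k), hk, rfl⟩
  fin_cases i <;> fin_cases j <;>
    first
    | exact absurd rfl hij
    | exact Tsp_le A (m 0 (by assumption)) (m 1 (by assumption))
    | (refine Tsp_le A (m 0 (by assumption)) ?_
       rw [aVec_eq_20]
       exact add_mem (m 2 (by assumption)) (m 0 (by assumption)))
    | (refine Tsp_le A ?_ (m 1 (by assumption))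
       rw [eVec_eq_12]
       exact add_mem (m 1 (by assumption)) (m 2 (by assumption)))

private lemma tauSet_compl (X : Set V) : (tauSet X)ᶜ = tauSet (Xᶜ) := rfl

end Aux

section Main

open Submodule Module

theorem stmt9 (A : Matrix V V (ZMod 2)) (hA : A.IsSymm) (hn : 5 ≤ Fintype.card V)
    (hprime : ¬ HasSplit A) (h : iasKappa A < Fintype.card V) :
    Odd (iasKappa A) ∧ 5 ≤ iasKappa A := by
  classical
  set n := Fintype.card V with hn'
  have hranku : iasRank A Set.univ = n := iasRank_univ A
  have hne : ({k : ℕ | ∃ S, VerticalSep A k S} ∪ {iasRank A Set.univ} : Set ℕ).Nonempty :=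
    ⟨iasRank A Set.univ, Or.inr rfl⟩
  have hmem : iasKappa A ∈ ({k : ℕ | ∃ S, VerticalSep A k S} ∪ {iasRank A Set.univ} : Set ℕ) :=
    Nat.sInf_mem hne
  have hmin : ∀ k, (∃ S, VerticalSep A k S) → iasKappa A ≤ k :=
    fun k hk => Nat.sInf_le (Or.inl hk)
  have hsep : ∃ S, VerticalSep A (iasKappa A) S := by
    rcases hmem with hs | hu
    · exact hs
    · rw [Set.mem_singleton_iff, hranku] at hu
      omega
  obtain ⟨S, hSsep⟩ := hsep
  obtain ⟨hκpos, hlamlt, hrS, hrSc⟩ := hSsep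
  set κ := iasKappa A with hκdef
  set U := span (ZMod 2) (iasCol A '' S) with hU
  set U' := span (ZMod 2) (iasCol A '' Sᶜ) with hU'
  have hrSU : iasRank A S = finrank (ZMod 2) U := rfl
  have hrSU' : iasRank A Sᶜ = finrank (ZMod 2) U' := rfl
  have hsupU : U ⊔ U' = ⊤ := by
    rw [hU, hU', ← Submodule.span_union, ← Set.image_union, Set.union_compl_self]
    exact span_top_of_eVec_mem (fun v => subset_span ⟨(v, 0), trivial, iasCol_zero A v⟩)
  have hUU' : finrank (ZMod 2) U + finrank (ZMod 2) U'
      = n + finrank (ZMod 2) (U ⊓ U' : Submodule (ZMod 2) (V → ZMod 2)) := by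
    have e := Submodule.finrank_sup_add_finrank_inf_eq U U'
    rw [hsupU, finrank_top, Module.finrank_fintype_fun_eq_card] at e
    omega
  have hlamS : iasLambda A S
      = finrank (ZMod 2) (U ⊓ U' : Submodule (ZMod 2) (V → ZMod 2)) := by
    have e : iasLambda A S = iasRank A S + iasRank A Sᶜ - iasRank A Set.univ := rfl
    rw [hrSU, hrSU', hranku] at e
    omega
  set X : Set V := {v : V | Tsp A v ≤ U} with hX
  have hcov : ∀ v, v ∉ X → Tsp A v ≤ U' := by
    intro v hv
    by_cases h0 : (v, (0 : Fin 3)) ∈ S <;>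
      by_cases h1 : (v, (1 : Fin 3)) ∈ S <;>
      by_cases h2 : (v, (2 : Fin 3)) ∈ S <;>
      first
      | exact absurd (T_le_side A S v 0 1 (by decide) h0 h1) hv
      | exact absurd (T_le_side A S v 0 2 (by decide) h0 h2) hv
      | exact absurd (T_le_side A S v 1 2 (by decide) h1 h2) hv
      | exact T_le_side A Sᶜ v 0 1 (by decide) h0 h1
      | exact T_le_side A Sᶜ v 0 2 (by decide) h0 h2
      | exact T_le_side A Sᶜ v 1 2 (by decide) h1 h2
  have hTX : span (ZMod 2) (iasCol A '' tauSet X) ≤ U := by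
    rw [span_le]
    rintro _ ⟨p, hp, rfl⟩
    exact hp (col_mem_Tsp A p)
  have hTXc : span (ZMod 2) (iasCol A '' tauSet (Xᶜ)) ≤ U' := by
    rw [span_le]
    rintro _ ⟨p, hp, rfl⟩
    exact hcov p.1 hp (col_mem_Tsp A p)
  set c := cutRank A X with hc
  have hrtX : iasRank A (tauSet X) = X.ncard + c := iasRank_tauSet A X
  have hrtXc : iasRank A (tauSet (Xᶜ)) = Xᶜ.ncard + c := by
    rw [iasRank_tauSet A (Xᶜ), cutRank_compl hA X]
  have hcards : X.ncard + Xᶜ.ncard = n := by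
    rw [Set.ncard_add_ncard_compl X, Nat.card_eq_fintype_card]
  have hsupτ : span (ZMod 2) (iasCol A '' tauSet X)
      ⊔ span (ZMod 2) (iasCol A '' tauSet (Xᶜ)) = ⊤ := by
    apply span_top_of_eVec_mem
    intro v
    by_cases hv : v ∈ X
    · exact Submodule.mem_sup_left (subset_span ⟨(v, 0), hv, iasCol_zero A v⟩)
    · exact Submodule.mem_sup_right (subset_span ⟨(v, 0), hv, iasCol_zero A v⟩)
  have hfrtX : finrank (ZMod 2) (span (ZMod 2) (iasCol A '' tauSet X))
      = X.ncard + c := hrtX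
  have hfrtXc : finrank (ZMod 2) (span (ZMod 2) (iasCol A '' tauSet (Xᶜ)))
      = Xᶜ.ncard + c := hrtXc
  have hD0 : finrank (ZMod 2) (span (ZMod 2) (iasCol A '' tauSet X)
      ⊓ span (ZMod 2) (iasCol A '' tauSet (Xᶜ)) : Submodule (ZMod 2) (V → ZMod 2))
      = 2 * c := by
    have e := Submodule.finrank_sup_add_finrank_inf_eq
      (span (ZMod 2) (iasCol A '' tauSet X)) (span (ZMod 2) (iasCol A '' tauSet (Xᶜ)))
    rw [hsupτ, finrank_top, Module.finrank_fintype_fun_eq_card, hfrtX, hfrtXc] at e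
    omega
  have hTle : ∀ v ∈ X, Tsp A v ≤ span (ZMod 2) (iasCol A '' tauSet X) :=
    fun v hv => Tsp_le A (subset_span ⟨(v, 0), hv, iasCol_zero A v⟩)
      (subset_span ⟨(v, 1), hv, iasCol_one A v⟩)
  have hTle' : ∀ v ∈ (Xᶜ : Set V), Tsp A v ≤ span (ZMod 2) (iasCol A '' tauSet (Xᶜ)) :=
    fun v hv => Tsp_le A (subset_span ⟨(v, 0), hv, iasCol_zero A v⟩)
      (subset_span ⟨(v, 1), hv, iasCol_one A v⟩)
  have hUle : U ≤ span (ZMod 2) (iasCol A '' tauSet X) ⊔ (U ⊓ U') := by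
    rw [hU, span_le]
    rintro _ ⟨p, hp, rfl⟩
    by_cases hpx : p.1 ∈ X
    · exact Submodule.mem_sup_left (hTle p.1 hpx (col_mem_Tsp A p))
    · exact Submodule.mem_sup_right (Submodule.mem_inf.mpr
        ⟨subset_span ⟨p, hp, rfl⟩, hcov p.1 hpx (col_mem_Tsp A p)⟩)
  have hU'le : U' ≤ span (ZMod 2) (iasCol A '' tauSet (Xᶜ)) ⊔ (U ⊓ U') := by
    rw [hU', span_le]
    rintro _ ⟨p, hp, rfl⟩
    by_cases hpx : p.1 ∈ X
    · exact Submodule.mem_sup_right (Submodule.mem_inf.mpr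
        ⟨hpx (col_mem_Tsp A p), subset_span ⟨p, hp, rfl⟩⟩)
    · exact Submodule.mem_sup_left (hTle' p.1 hpx (col_mem_Tsp A p))
  have m4 : finrank (ZMod 2) (U ⊓ U' : Submodule (ZMod 2) (V → ZMod 2)) < κ := by
    rw [← hlamS]; exact hlamlt
  have hXcard : c + 1 ≤ X.ncard := by
    have e := Submodule.finrank_sup_add_finrank_inf_eq
      (span (ZMod 2) (iasCol A '' tauSet X)) (U ⊓ U')
    have m1 : κ ≤ finrank (ZMod 2) U := by rw [← hrSU]; exact hrS
    have m2 : finrank (ZMod 2) U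
        ≤ finrank (ZMod 2) (span (ZMod 2) (iasCol A '' tauSet X) ⊔ (U ⊓ U') :
            Submodule (ZMod 2) (V → ZMod 2)) :=
      Submodule.finrank_mono hUle
    have m3 : 2 * c ≤ finrank (ZMod 2) (span (ZMod 2) (iasCol A '' tauSet X) ⊓ (U ⊓ U') :
        Submodule (ZMod 2) (V → ZMod 2)) := by
      rw [← hD0]
      exact Submodule.finrank_mono (le_inf inf_le_left (inf_le_inf hTX hTXc))
    rw [hfrtX] at e
    omega
  have hXccard : c + 1 ≤ Xᶜ.ncard := by
    have e := Submodule.finrank_sup_add_finrank_inf_eq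
      (span (ZMod 2) (iasCol A '' tauSet (Xᶜ))) (U ⊓ U')
    have m1 : κ ≤ finrank (ZMod 2) U' := by rw [← hrSU']; exact hrSc
    have m2 : finrank (ZMod 2) U'
        ≤ finrank (ZMod 2) (span (ZMod 2) (iasCol A '' tauSet (Xᶜ)) ⊔ (U ⊓ U') :
            Submodule (ZMod 2) (V → ZMod 2)) :=
      Submodule.finrank_mono hU'le
    have m3 : 2 * c ≤ finrank (ZMod 2) (span (ZMod 2) (iasCol A '' tauSet (Xᶜ)) ⊓ (U ⊓ U') :
        Submodule (ZMod 2) (V → ZMod 2)) := by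
      rw [← hD0]
      exact Submodule.finrank_mono (le_inf inf_le_right (inf_le_inf hTX hTXc))
    rw [hfrtXc] at e
    omega
  have h2cle : 2 * c ≤ finrank (ZMod 2) (U ⊓ U' : Submodule (ZMod 2) (V → ZMod 2)) := by
    rw [← hD0]
    exact Submodule.finrank_mono (inf_le_inf hTX hTXc)
  have hsepτ : VerticalSep A (2 * c + 1) (tauSet X) := by
    refine ⟨by omega, ?_, ?_, ?_⟩
    · have e : iasLambda A (tauSet X)
          = iasRank A (tauSet X) + iasRank A ((tauSet X)ᶜ) - iasRank A Set.univ := rfl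
      rw [tauSet_compl, hrtX, hrtXc, hranku] at e
      omega
    · rw [hrtX]; omega
    · rw [tauSet_compl, hrtXc]; omega
  have hκle : κ ≤ 2 * c + 1 := hmin _ ⟨tauSet X, hsepτ⟩
  have hκeq : κ = 2 * c + 1 := by omega
  have hc2 : 2 ≤ c := by
    by_contra hcle
    push_neg at hcle
    apply hprime
    by_cases hbig : 2 ≤ X.ncard ∧ 2 ≤ Xᶜ.ncard
    · exact ⟨X, hbig.1, hbig.2, by omega⟩
    · by_cases hX1 : X.ncard ≤ 1
      · have hc0 : c = 0 := by omega
        obtain ⟨w, hw⟩ : (Xᶜ : Set V).Nonempty :=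
          Set.nonempty_of_ncard_ne_zero (by omega)
        refine ⟨insert w X, ?_, ?_, ?_⟩
        · rw [Set.ncard_insert_of_notMem hw]
          omega
        · have e := Set.ncard_add_ncard_compl (insert w X)
          rw [Nat.card_eq_fintype_card, Set.ncard_insert_of_notMem hw] at e
          omega
        · have e := cutRank_insert_le A X w
          omega
      · have hXc1 : Xᶜ.ncard ≤ 1 := by
          by_contra hh
          exact hbig ⟨by omega, by omega⟩
        have hc0 : c = 0 := by omega
        obtain ⟨u, hu⟩ : X.Nonempty :=
          Set.nonempty_of_ncard_ne_zero (by omega)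
        refine ⟨X \ {u}, ?_, ?_, ?_⟩
        · rw [Set.ncard_diff_singleton_of_mem hu]
          omega
        · have e := Set.ncard_add_ncard_compl (X \ {u})
          rw [Nat.card_eq_fintype_card, Set.ncard_diff_singleton_of_mem hu] at e
          omega
        · have e := cutRank_diff_le A X u
          omega
  exact ⟨⟨c, by omega⟩, by omega⟩

end Main
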